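/- Let φ be an ML(A)-formula in negation normal form and let φ' be the ML(DD)-formula τ(φ) ∧ ¬s ∧ @_s⊤ ∧ @_{◇s}s, where s and the variables p_ψ (one for each subformula ψ of φ) are distinct fresh propositional variables not occurring in φ, and τ is defined by: τ(p) = p, τ(¬p) = ¬p, τ(ψ∨χ) = τ(ψ)∨τ(χ), τ(ψ∧χ) = τ(ψ)∧τ(χ), τ(◇ψ) = ◇τ(ψ), τ(□ψ) = □τ(ψ), τ(Eψ) = @_{p_ψ}(τ(ψ) ∧ ¬s), and τ(Aψ) = @_{(s ∨ ¬τ(ψ))}⊤. Then φ is satisfiable if and only if φ' is satisfiable. -/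

import Mathlib

/-- ML(A)-formulas in negation normal form: the basic modal language with the universal
modality `A` and its dual `E`, with negation only in front of propositional variables. -/
inductive MLA : Type
  | prop : ℕ → MLA
  | nprop : ℕ → MLA
  | and : MLA → MLA → MLA
  | or : MLA → MLA → MLA
  | dia : MLA → MLA
  | box : MLA → MLA
  | ex : MLA → MLA   -- E (somewhere)
  | all : MLA → MLA  -- A (everywhere)

/-- ML(DD)-formulas over propositional variables indexed by `α`. -/
inductive MLDD (α : Type) : Type
  | prop : α → MLDD α
  | neg : MLDD α → MLDD α
  | or : MLDD α → MLDD α → MLDD α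
  | dia : MLDD α → MLDD α
  | dd : MLDD α → MLDD α → MLDD α

/-- A Kripke model with propositional variables indexed by `α`. -/
structure Model (α : Type) where
  W : Type
  ne : Nonempty W
  R : W → W → Prop
  V : α → W → Prop

/-- Satisfaction relation for ML(DD). -/
def sat {α : Type} (M : Model α) : M.W → MLDD α → Prop
  | w, .prop p => M.V p w
  | w, .neg φ => ¬ sat M w φ
  | w, .or φ ψ => sat M w φ ∨ sat M w ψ
  | w, .dia φ => ∃ v, M.R w v ∧ sat M v φ
  | _, .dd φ ψ => ∃ v, sat M v φ ∧ sat M v ψ ∧ ∀ v', v' ≠ v → ¬ sat M v' φ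

/-- Satisfaction relation for ML(A). -/
def satA (M : Model ℕ) : M.W → MLA → Prop
  | w, .prop p => M.V p w
  | w, .nprop p => ¬ M.V p w
  | w, .and φ ψ => satA M w φ ∧ satA M w ψ
  | w, .or φ ψ => satA M w φ ∨ satA M w ψ
  | w, .dia φ => ∃ v, M.R w v ∧ satA M v φ
  | w, .box φ => ∀ v, M.R w v → satA M v φ
  | _, .ex φ => ∃ v, satA M v φ
  | _, .all φ => ∀ v, satA M v φ

/-- The type of propositional variables of the translated formulas: `.inl p` is an original
variable of φ, `.inr none` is the fresh variable `s` marking the `trash' world, and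
`.inr (some ψ)` is the fresh variable `p_ψ` for the subformula ψ. All the `.inr` variables
are fresh, i.e. distinct from each other and not occurring in φ. -/
abbrev Atom : Type := ℕ ⊕ Option MLA

/-- The fresh variable `s`. -/
def sAtom : MLDD Atom := .prop (.inr none)

/-- Conjunction, as the usual abbreviation. -/
def mand (φ ψ : MLDD Atom) : MLDD Atom := .neg (.or (.neg φ) (.neg ψ))

/-- ⊤, as a tautology. -/
def mtop : MLDD Atom := .or (.prop (.inl 0)) (.neg (.prop (.inl 0)))

/-- The translation τ from ML(A)-formulas in NNF to ML(DD)-formulas. -/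
def tr : MLA → MLDD Atom
  | .prop p => .prop (.inl p)
  | .nprop p => .neg (.prop (.inl p))
  | .and φ ψ => mand (tr φ) (tr ψ)
  | .or φ ψ => .or (tr φ) (tr ψ)
  | .dia φ => .dia (tr φ)
  | .box φ => .neg (.dia (.neg (tr φ)))
  | .ex ψ => .dd (.prop (.inr (some ψ))) (mand (tr ψ) (.neg sAtom))
  | .all ψ => .dd (.or sAtom (.neg (tr ψ))) mtop

/-- φ' = τ(φ) ∧ ¬s ∧ @_s⊤ ∧ @_{◇s}s. -/
def transl (φ : MLA) : MLDD Atom :=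
  mand (tr φ) (mand (.neg sAtom) (mand (.dd sAtom mtop) (.dd (.dia sAtom) sAtom)))

section Aux

lemma sat_mand {M : Model Atom} {w : M.W} {a b : MLDD Atom} :
    sat M w (mand a b) ↔ sat M w a ∧ sat M w b := by
  simp [mand, sat]

lemma sat_mtop {M : Model Atom} (w : M.W) : sat M w mtop := by
  by_cases h : M.V (.inl 0) w <;> simp [mtop, sat, h]

section Forward

variable (M : Model ℕ)

noncomputable def fwdModel : Model Atom where
  W := Option M.W
  ne := ⟨none⟩
  R a b := match a, b with
    | some u, some v => M.R u v
    | none, none => True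
    | _, _ => False
  V a w := match a, w with
    | .inl p, some v => M.V p v
    | .inr none, none => True
    | .inr (some ψ), some v => ∃ h : (∃ u, satA M u ψ), v = h.choose
    | _, _ => False

lemma fwd_not_s (v : M.W) : ¬ sat (fwdModel M) (some v) sAtom := by
  simp [sat, sAtom, fwdModel]

lemma fwd_iff : ∀ (ψ : MLA) (v : M.W),
    sat (fwdModel M) (some v) (tr ψ) ↔ satA M v ψ := by
  intro ψ
  induction ψ with
  | prop p => intro v; simp [tr, sat, satA, fwdModel]
  | nprop p => intro v; simp [tr, sat, satA, fwdModel]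
  | and a b iha ihb => intro v; exact (sat_mand (M := fwdModel M) (w := some v)).trans (and_congr (iha v) (ihb v))
  | or a b iha ihb => intro v; simp [tr, sat, satA, iha, ihb]
  | dia a iha =>
    intro v
    simp only [tr, sat, satA]
    constructor
    · rintro ⟨u, hR, hu⟩
      match u with
      | some u => exact ⟨u, hR, (iha u).1 hu⟩
      | none => exact absurd hR (by simp [fwdModel])
    · rintro ⟨u, hR, hu⟩
      exact ⟨some u, hR, (iha u).2 hu⟩
  | box a iha =>
    intro v
    simp only [tr, sat, satA]
    constructor
    · intro h u hR
      by_contra hc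
      exact h ⟨some u, hR, fun hs => hc ((iha u).1 hs)⟩
    · rintro h ⟨u, hR, hu⟩
      match u with
      | some u => exact hu ((iha u).2 (h u hR))
      | none => exact absurd hR (by simp [fwdModel])
  | ex a iha =>
    intro v
    simp only [tr, sat, satA]
    constructor
    · rintro ⟨u, hV, -, -⟩
      match u with
      | some u =>
        obtain ⟨h, -⟩ := hV
        exact h
      | none => exact absurd hV (by simp [fwdModel])
    · intro h
      refine ⟨some h.choose, ⟨h, rfl⟩,
        (sat_mand (a := tr a) (b := .neg sAtom)).mpr
          ⟨(iha _).2 h.choose_spec, fwd_not_s M _⟩, ?_⟩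
      · rintro u hne hV
        match u with
        | some u =>
          obtain ⟨h', rfl⟩ := hV
          exact hne rfl
        | none => exact (by simp [fwdModel] at hV)
  | all a iha =>
    intro v
    simp only [tr, sat, satA]
    constructor
    · rintro ⟨u, hu, -, huniq⟩ x
      have hnone : sat (fwdModel M) none (.or sAtom (.neg (tr a))) := by
        left; simp [sat, sAtom, fwdModel]
      have hu_eq : u = none := by
        by_contra hne
        exact huniq none (fun e => hne e.symm) hnone
      subst hu_eq
      have := huniq (some x) (Option.some_ne_none x)
      simp only [sat, not_or, not_not] at this
      exact (iha x).1 this.2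
    · intro h
      refine ⟨none, Or.inl (by simp [sat, sAtom, fwdModel]), sat_mtop _, ?_⟩
      rintro u hne (hs | hns)
      · match u with
        | some u => exact fwd_not_s M u hs
        | none => exact hne rfl
      · match u with
        | some u => exact hns ((iha u).2 (h u))
        | none => exact hne rfl

end Forward

section Backward

variable (M : Model Atom) (t : M.W)

def bwdModel (ht : ∃ v : M.W, v ≠ t) : Model ℕ where
  W := {v : M.W // v ≠ t}
  ne := ⟨⟨ht.choose, ht.choose_spec⟩⟩
  R a b := M.R a.1 b.1
  V p v := M.V (.inl p) v.1

lemma bwd_sound (hts : M.V (.inr none) t)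
    (hnoR : ∀ v u : M.W, v ≠ t → M.R v u → u ≠ t)
    (ht : ∃ v : M.W, v ≠ t) : ∀ (ψ : MLA) (v : M.W) (hv : v ≠ t),
    sat M v (tr ψ) → satA (bwdModel M t ht) ⟨v, hv⟩ ψ := by
  intro ψ
  induction ψ with
  | prop p => intro v hv h; simpa [tr, sat, satA, bwdModel] using h
  | nprop p => intro v hv h; simpa [tr, sat, satA, bwdModel] using h
  | and a b iha ihb =>
    intro v hv h
    rw [tr, sat_mand] at h
    exact ⟨iha v hv h.1, ihb v hv h.2⟩
  | or a b iha ihb =>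
    intro v hv h
    rcases h with h | h
    · exact Or.inl (iha v hv h)
    · exact Or.inr (ihb v hv h)
  | dia a iha =>
    rintro v hv ⟨u, hR, hu⟩
    have hu' : u ≠ t := hnoR v u hv hR
    exact ⟨⟨u, hu'⟩, hR, iha u hu' hu⟩
  | box a iha =>
    intro v hv h
    simp only [tr, sat, not_exists, not_and, not_not] at h
    rintro ⟨u, hu⟩ hR
    exact iha u hu (h u hR)
  | ex a iha =>
    rintro v hv ⟨u, hVu, hu, -⟩
    rw [sat_mand] at hu
    have hut : u ≠ t := by
      intro e; subst e
      exact hu.2 hts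
    exact ⟨⟨u, hut⟩, iha u hut hu.1⟩
  | all a iha =>
    rintro v hv ⟨u, hu, -, huniq⟩
    have hut : u = t := by
      by_contra hne
      exact huniq t (fun e => hne e.symm) (Or.inl hts)
    subst hut
    rintro ⟨x, hx⟩
    have := huniq x hx
    simp only [sat, not_or, not_not] at this
    exact iha x hx this.2

end Backward

end Aux

/-- φ is satisfiable iff φ' = τ(φ) ∧ ¬s ∧ @_s⊤ ∧ @_{◇s}s is satisfiable. -/
theorem mla_satisfiable_iff_transl_satisfiable (φ : MLA) :
    (∃ (M : Model ℕ) (w : M.W), satA M w φ) ↔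
    (∃ (M : Model Atom) (w : M.W), sat M w (transl φ)) := by
  constructor
  · rintro ⟨M, w, hw⟩
    refine ⟨fwdModel M, some w, ?_⟩
    rw [transl]
    refine (sat_mand.trans (and_congr Iff.rfl (sat_mand.trans (and_congr Iff.rfl sat_mand)))).mpr ?_
    refine ⟨(fwd_iff M φ w).2 hw, fwd_not_s M w, ⟨none, ?_, sat_mtop _, ?_⟩,
      ⟨none, ⟨none, ?_, ?_⟩, ?_, ?_⟩⟩
    · simp [sat, sAtom, fwdModel]
    · rintro u hne hs
      match u with
      | some u => exact fwd_not_s M u hs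
      | none => exact hne rfl
    · simp [fwdModel]
    · simp [sat, sAtom, fwdModel]
    · simp [sat, sAtom, fwdModel]
    · rintro u hne ⟨u', hR, hs⟩
      match u, u' with
      | some u, some u' => exact fwd_not_s M u' hs
      | some u, none => exact (by simp [fwdModel] at hR)
      | none, _ => exact hne rfl
  · rintro ⟨M, w, hw⟩
    rw [transl, sat_mand, sat_mand, sat_mand] at hw
    obtain ⟨h1, h2, ⟨t, hst, -, huniq3⟩, ⟨u4, hdia4, hs4, huniq4⟩⟩ := hw
    have hu4 : u4 = t := by
      by_contra hne
      exact huniq3 u4 hne hs4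
    have hwt : w ≠ t := fun e => h2 (e ▸ hst)
    have hnoR : ∀ v u : M.W, v ≠ t → M.R v u → u ≠ t := by
      intro v u hv hR e
      exact huniq4 v (by rw [hu4]; exact hv) ⟨u, hR, by rw [e]; exact hst⟩
    have ht : ∃ v : M.W, v ≠ t := ⟨w, hwt⟩
    exact ⟨bwdModel M t ht, ⟨w, hwt⟩, bwd_sound M t hst hnoR ht φ w hwt h1⟩
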